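/- For real numbers λ₁,λ₂,λ₃, the two 9×9 matrices I₃ ⊗ I₃ + (3/2)·(λ₁·J₁⊗J₁ + λ₂·J₂⊗J₂ + λ₃·J₃⊗J₃) and I₃ ⊗ I₃ + (3/2)·(λ₁·J₁⊗J₁ − λ₂·J₂⊗J₂ + λ₃·J₃⊗J₃) are both positive semidefinite if and only if 4 − 9(λ₁² + λ₂² + λ₃²) + 27·λ₁λ₂λ₃ ≥ 0 and 4 − 9(λ₁² + λ₂² + λ₃²) − 27·λ₁λ₂λ₃ ≥ 0. -/

import Mathlib

set_option maxHeartbeats 2000000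

open Matrix Kronecker
open scoped ComplexOrder

/-- The spin-1 angular momentum matrix J₁. -/
noncomputable def spinOneJ1 : Matrix (Fin 3) (Fin 3) ℂ :=
  ((1 / Real.sqrt 2 : ℝ) : ℂ) • !![0, 1, 0; 1, 0, 1; 0, 1, 0]

/-- The spin-1 angular momentum matrix J₂. -/
noncomputable def spinOneJ2 : Matrix (Fin 3) (Fin 3) ℂ :=
  ((1 / Real.sqrt 2 : ℝ) : ℂ) • !![0, -Complex.I, 0; Complex.I, 0, -Complex.I; 0, Complex.I, 0]

/-- The spin-1 angular momentum matrix J₃. -/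
def spinOneJ3 : Matrix (Fin 3) (Fin 3) ℂ := !![1, 0, 0; 0, 0, 0; 0, 0, -1]

/- ### Auxiliary definitions -/

def myA1 : Matrix (Fin 3) (Fin 3) ℂ := !![0,1,0;1,0,1;0,1,0]
noncomputable def myA2 : Matrix (Fin 3) (Fin 3) ℂ :=
  !![0,-Complex.I,0;Complex.I,0,-Complex.I;0,Complex.I,0]

noncomputable def Nmat (a b c : ℝ) : Matrix (Fin 3 × Fin 3) (Fin 3 × Fin 3) ℂ :=
  (1 : Matrix (Fin 3) (Fin 3) ℂ) ⊗ₖ (1 : Matrix (Fin 3) (Fin 3) ℂ)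
    + (((a+b)/2 : ℝ) : ℂ) • (myA1 ⊗ₖ myA1) + (((a-b)/2 : ℝ) : ℂ) • (myA2 ⊗ₖ myA2)
    + ((c : ℝ) : ℂ) • (spinOneJ3 ⊗ₖ spinOneJ3)

noncomputable def Qf (a b c : ℝ) (x : Fin 3 × Fin 3 → ℂ) : ℂ :=
  ((1+c : ℝ) : ℂ) * (starRingEnd ℂ (x (0,0)) * x (0,0) + starRingEnd ℂ (x (2,2)) * x (2,2))
  + ((1-c : ℝ) : ℂ) * (starRingEnd ℂ (x (0,2)) * x (0,2) + starRingEnd ℂ (x (2,0)) * x (2,0))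
  + (starRingEnd ℂ (x (0,1)) * x (0,1) + starRingEnd ℂ (x (1,0)) * x (1,0)
      + starRingEnd ℂ (x (1,2)) * x (1,2) + starRingEnd ℂ (x (2,1)) * x (2,1)
      + starRingEnd ℂ (x (1,1)) * x (1,1))
  + ((a : ℝ) : ℂ) * (starRingEnd ℂ (x (0,1)) * x (1,0) + starRingEnd ℂ (x (1,0)) * x (0,1)
      + starRingEnd ℂ (x (1,2)) * x (2,1) + starRingEnd ℂ (x (2,1)) * x (1,2)
      + starRingEnd ℂ (x (0,2)) * x (1,1) + starRingEnd ℂ (x (1,1)) * x (0,2)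
      + starRingEnd ℂ (x (2,0)) * x (1,1) + starRingEnd ℂ (x (1,1)) * x (2,0))
  + ((b : ℝ) : ℂ) * (starRingEnd ℂ (x (0,1)) * x (1,2) + starRingEnd ℂ (x (1,2)) * x (0,1)
      + starRingEnd ℂ (x (1,0)) * x (2,1) + starRingEnd ℂ (x (2,1)) * x (1,0)
      + starRingEnd ℂ (x (0,0)) * x (1,1) + starRingEnd ℂ (x (1,1)) * x (0,0)
      + starRingEnd ℂ (x (2,2)) * x (1,1) + starRingEnd ℂ (x (1,1)) * x (2,2))

noncomputable def pc (r : ℝ) (z : ℂ) : ℂ := (r : ℂ) * (starRingEnd ℂ z * z)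

lemma form_eq (a b c : ℝ) (x : Fin 3 × Fin 3 → ℂ) :
    star x ⬝ᵥ (Nmat a b c) *ᵥ x = Qf a b c x := by
  simp [dotProduct, mulVec, Fintype.sum_prod_type, Fin.sum_univ_three, Nmat, Qf,
    Matrix.one_apply, myA1, myA2, spinOneJ3, Complex.ofReal_div, Complex.ofReal_add,
    Complex.ofReal_sub, Matrix.vecHead, Matrix.vecTail, Prod.mk_zero_zero, Prod.mk_one_one]
  ring

lemma kron_ct (A B : Matrix (Fin 3) (Fin 3) ℂ) : (A ⊗ₖ B)ᴴ = Aᴴ ⊗ₖ Bᴴ := by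
  ext p q
  simp [conjTranspose_apply, kroneckerMap_apply, mul_comm]

lemma myA1_herm : myA1ᴴ = myA1 := by
  ext i j; fin_cases i <;> fin_cases j <;> simp [myA1]

lemma myA2_herm : myA2ᴴ = myA2 := by
  ext i j; fin_cases i <;> fin_cases j <;> simp [myA2]

lemma J3_herm : spinOneJ3ᴴ = spinOneJ3 := by
  ext i j; fin_cases i <;> fin_cases j <;>
    simp [spinOneJ3, Matrix.vecHead, Matrix.vecTail]

lemma Nmat_herm (a b c : ℝ) : (Nmat a b c).IsHermitian := by
  show (Nmat a b c)ᴴ = Nmat a b c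
  simp [Nmat, conjTranspose_add, conjTranspose_smul, kron_ct, myA1_herm, myA2_herm,
    J3_herm, Complex.star_def, Complex.conj_ofReal]

lemma pc_nonneg {r : ℝ} (hr : 0 ≤ r) (z : ℂ) : 0 ≤ pc r z := by
  rw [pc, mul_comm (starRingEnd ℂ z) z, Complex.mul_conj, ← Complex.ofReal_mul,
    Complex.zero_le_real]
  exact mul_nonneg hr (Complex.normSq_nonneg z)

lemma cancel_pos {r : ℝ} (hr : 0 < r) {z : ℂ} (h : 0 ≤ (r : ℂ) * z) : 0 ≤ z := by
  rw [Complex.le_def] at h ⊢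
  simp only [Complex.zero_re, Complex.zero_im, Complex.re_ofReal_mul,
    Complex.im_ofReal_mul] at h ⊢
  constructor
  · nlinarith [h.1]
  · rcases mul_eq_zero.mp h.2.symm with h2 | h2
    · exact absurd h2 (ne_of_gt hr)
    · exact h2.symm

lemma sos_interior (a b c : ℝ) (x : Fin 3 × Fin 3 → ℂ) :
    ((2*(1-c^2) : ℝ) : ℂ) * Qf a b c x =
      pc ((1-c^2)*(1+a+b)/2) (x (0,1) + x (1,0) + x (1,2) + x (2,1))
      + pc ((1-c^2)*(1+a-b)/2) (x (0,1) + x (1,0) - x (1,2) - x (2,1))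
      + pc ((1-c^2)*(1-a+b)/2) (x (0,1) - x (1,0) + x (1,2) - x (2,1))
      + pc ((1-c^2)*(1-a-b)/2) (x (0,1) - x (1,0) - x (1,2) + x (2,1))
      + pc ((1-c^2)*(1+c)) (x (0,0) - x (2,2))
      + pc ((1-c^2)*(1-c)) (x (0,2) - x (2,0))
      + pc (1-c) (((1+c : ℝ) : ℂ) * (x (0,0) + x (2,2)) + ((2*b : ℝ) : ℂ) * x (1,1))
      + pc (1+c) (((1-c : ℝ) : ℂ) * (x (0,2) + x (2,0)) + ((2*a : ℝ) : ℂ) * x (1,1))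
      + pc (2*((1-c^2) - 2*a^2*(1+c) - 2*b^2*(1-c))) (x (1,1)) := by
  simp only [Qf, pc, map_add, map_sub, _root_.map_mul, Complex.conj_ofReal]
  push_cast
  ring

lemma sos_cone (b : ℝ) (x : Fin 3 × Fin 3 → ℂ) :
    Qf 0 b 1 x =
      pc ((1+b)/4) (x (0,1) + x (1,0) + x (1,2) + x (2,1))
      + pc ((1-b)/4) (x (0,1) + x (1,0) - x (1,2) - x (2,1))
      + pc ((1+b)/4) (x (0,1) - x (1,0) + x (1,2) - x (2,1))
      + pc ((1-b)/4) (x (0,1) - x (1,0) - x (1,2) + x (2,1))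
      + pc 1 (x (0,0) - x (2,2))
      + pc 1 (x (0,0) + x (2,2) + ((b : ℝ) : ℂ) * x (1,1))
      + pc (1-b^2) (x (1,1)) := by
  simp only [Qf, pc, map_add, map_sub, _root_.map_mul, Complex.conj_ofReal]
  push_cast
  ring

lemma sos_cminusone (a : ℝ) (x : Fin 3 × Fin 3 → ℂ) :
    Qf a 0 (-1) x =
      pc ((1+a)/4) (x (0,1) + x (1,0) + x (1,2) + x (2,1))
      + pc ((1+a)/4) (x (0,1) + x (1,0) - x (1,2) - x (2,1))
      + pc ((1-a)/4) (x (0,1) - x (1,0) + x (1,2) - x (2,1))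
      + pc ((1-a)/4) (x (0,1) - x (1,0) - x (1,2) + x (2,1))
      + pc 1 (x (0,2) - x (2,0))
      + pc 1 (x (0,2) + x (2,0) + ((a : ℝ) : ℂ) * x (1,1))
      + pc (1-a^2) (x (1,1)) := by
  simp only [Qf, pc, map_add, map_sub, _root_.map_mul, Complex.conj_ofReal]
  push_cast
  ring

/-- Backward direction: the explicit inequalities imply positive semidefiniteness. -/
lemma bwd (a b c : ℝ) (h1 : |a+b| ≤ 1) (h2 : |a-b| ≤ 1) (h3 : |c| ≤ 1)
    (hD : 0 ≤ (1-c^2) - 2*a^2*(1+c) - 2*b^2*(1-c)) : (Nmat a b c).PosSemidef := by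
  rw [abs_le] at h1 h2 h3
  refine PosSemidef.of_dotProduct_mulVec_nonneg (Nmat_herm a b c) (fun x => ?_)
  rw [form_eq]
  rcases eq_or_lt_of_le h3.2 with hc1 | hc1
  · -- c = 1
    have ha : a = 0 := by nlinarith [hD, sq_nonneg a, sq_nonneg b]
    subst ha; subst hc1
    rw [sos_cone]
    have hb : |b| ≤ 1 := by rw [abs_le]; constructor <;> linarith
    rw [abs_le] at hb
    refine add_nonneg (add_nonneg (add_nonneg (add_nonneg (add_nonneg (add_nonneg ?_ ?_) ?_) ?_) ?_) ?_) ?_ <;>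
      apply pc_nonneg <;> nlinarith
  rcases eq_or_lt_of_le h3.1 with hc2 | hc2
  · -- c = -1
    have hb : b = 0 := by nlinarith [hD, sq_nonneg a, sq_nonneg b]
    subst hb
    rw [← hc2]
    rw [sos_cminusone]
    have ha : |a| ≤ 1 := by rw [abs_le]; constructor <;> linarith
    rw [abs_le] at ha
    refine add_nonneg (add_nonneg (add_nonneg (add_nonneg (add_nonneg (add_nonneg ?_ ?_) ?_) ?_) ?_) ?_) ?_ <;>
      apply pc_nonneg <;> nlinarith
  · -- -1 < c < 1
    have hpos : 0 < 2*(1-c^2) := by nlinarith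
    apply cancel_pos hpos
    rw [sos_interior]
    have h1c : (0:ℝ) ≤ 1 - c := by linarith
    have h2c : (0:ℝ) ≤ 1 + c := by linarith
    have hcc : (0:ℝ) ≤ 1 - c^2 := by nlinarith
    refine add_nonneg (add_nonneg (add_nonneg (add_nonneg (add_nonneg (add_nonneg (add_nonneg (add_nonneg ?_ ?_) ?_) ?_) ?_) ?_) ?_) ?_) ?_ <;>
      apply pc_nonneg <;> nlinarith

lemma eval_real (a b c : ℝ) (h : (Nmat a b c).PosSemidef) (v : Matrix (Fin 3) (Fin 3) ℝ) :
    0 ≤ Qf a b c (fun p => ((v p.1 p.2 : ℝ) : ℂ)) := by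
  rw [← form_eq]
  exact h.dotProduct_mulVec_nonneg _

/-- Forward direction: positive semidefiniteness implies the determinant inequality. -/
lemma fwd (a b c : ℝ) (h : (Nmat a b c).PosSemidef) :
    0 ≤ (1-c^2) - 2*a^2*(1+c) - 2*b^2*(1-c) := by
  have e1 : (0:ℝ) ≤ 2*(1+c) := by
    have := eval_real a b c h !![1, 0, 0; 0, 0, 0; 0, 0, -1]
    rw [show Qf a b c (fun p => (((!![1, 0, 0; 0, 0, 0; 0, 0, -1] : Matrix (Fin 3) (Fin 3) ℝ) p.1 p.2 : ℝ) : ℂ)) = ((2*(1+c) : ℝ) : ℂ) from by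
      simp [Qf, Matrix.vecHead, Matrix.vecTail, Complex.conj_ofReal]; push_cast; ring] at this
    exact Complex.zero_le_real.mp this
  have e2 : (0:ℝ) ≤ 2*(1-c) := by
    have := eval_real a b c h !![0, 0, 1; 0, 0, 0; -1, 0, 0]
    rw [show Qf a b c (fun p => (((!![0, 0, 1; 0, 0, 0; -1, 0, 0] : Matrix (Fin 3) (Fin 3) ℝ) p.1 p.2 : ℝ) : ℂ)) = ((2*(1-c) : ℝ) : ℂ) from by
      simp [Qf, Matrix.vecHead, Matrix.vecTail, Complex.conj_ofReal]; push_cast; ring] at this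
    exact Complex.zero_le_real.mp this
  have e3 : (0:ℝ) ≤ 2*a^2*(1-c) - 4*a^4 := by
    have := eval_real a b c h !![0, 0, -a; 0, 2*a^2, 0; -a, 0, 0]
    rw [show Qf a b c (fun p => (((!![0, 0, -a; 0, 2*a^2, 0; -a, 0, 0] : Matrix (Fin 3) (Fin 3) ℝ) p.1 p.2 : ℝ) : ℂ)) = ((2*a^2*(1-c) - 4*a^4 : ℝ) : ℂ) from by
      simp [Qf, Matrix.vecHead, Matrix.vecTail, Complex.conj_ofReal]; push_cast; ring] at this
    exact Complex.zero_le_real.mp this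
  have e4 : (0:ℝ) ≤ 2*b^2*(1+c) - 4*b^4 := by
    have := eval_real a b c h !![-b, 0, 0; 0, 2*b^2, 0; 0, 0, -b]
    rw [show Qf a b c (fun p => (((!![-b, 0, 0; 0, 2*b^2, 0; 0, 0, -b] : Matrix (Fin 3) (Fin 3) ℝ) p.1 p.2 : ℝ) : ℂ)) = ((2*b^2*(1+c) - 4*b^4 : ℝ) : ℂ) from by
      simp [Qf, Matrix.vecHead, Matrix.vecTail, Complex.conj_ofReal]; push_cast; ring] at this
    exact Complex.zero_le_real.mp this
  have e5 : (0:ℝ) ≤ (1-c^2) * ((1-c^2) - 2*a^2*(1+c) - 2*b^2*(1-c)) := by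
    have := eval_real a b c h !![-(b*(1-c)), 0, -(a*(1+c)); 0, 1-c^2, 0; -(a*(1+c)), 0, -(b*(1-c))]
    rw [show Qf a b c (fun p => (((!![-(b*(1-c)), 0, -(a*(1+c)); 0, 1-c^2, 0; -(a*(1+c)), 0, -(b*(1-c))] : Matrix (Fin 3) (Fin 3) ℝ) p.1 p.2 : ℝ) : ℂ)) = (((1-c^2) * ((1-c^2) - 2*a^2*(1+c) - 2*b^2*(1-c)) : ℝ) : ℂ) from by
      simp [Qf, Matrix.vecHead, Matrix.vecTail, Complex.conj_ofReal]; push_cast; ring] at this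
    exact Complex.zero_le_real.mp this
  rcases eq_or_lt_of_le (show c ≤ 1 by linarith) with hc1 | hc1
  · subst hc1
    have h6 : a^2 ≤ 0 := by nlinarith [e3]
    nlinarith [h6, sq_nonneg a, sq_nonneg b]
  rcases eq_or_lt_of_le (show (-1:ℝ) ≤ c by linarith) with hc2 | hc2
  · have hc2' : c = -1 := hc2.symm
    subst hc2'
    have h6 : b^2 ≤ 0 := by nlinarith [e4]
    nlinarith [h6, sq_nonneg a, sq_nonneg b]
  · have hcc : (0:ℝ) < 1 - c^2 := by nlinarith
    nlinarith [e5, mul_pos hcc hcc]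

lemma half_eq : ((1 / Real.sqrt 2 : ℝ) : ℂ) * ((1 / Real.sqrt 2 : ℝ) : ℂ) = ((1/2 : ℝ) : ℂ) := by
  have h : (1 / Real.sqrt 2) * (1 / Real.sqrt 2) = (1/2 : ℝ) := by
    rw [div_mul_div_comm, one_mul, Real.mul_self_sqrt (by norm_num : (0:ℝ) ≤ 2)]
  rw [← Complex.ofReal_mul, h]

lemma J1_kron : spinOneJ1 ⊗ₖ spinOneJ1 = ((1/2 : ℝ) : ℂ) • (myA1 ⊗ₖ myA1) := by
  rw [show spinOneJ1 = ((1 / Real.sqrt 2 : ℝ) : ℂ) • myA1 from rfl,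
    smul_kronecker, kronecker_smul, smul_smul, half_eq]

lemma J2_kron : spinOneJ2 ⊗ₖ spinOneJ2 = ((1/2 : ℝ) : ℂ) • (myA2 ⊗ₖ myA2) := by
  rw [show spinOneJ2 = ((1 / Real.sqrt 2 : ℝ) : ℂ) • myA2 from rfl,
    smul_kronecker, kronecker_smul, smul_smul, half_eq]

lemma Mplus_eq (l1 l2 l3 : ℝ) :
    (1 : Matrix (Fin 3) (Fin 3) ℂ) ⊗ₖ (1 : Matrix (Fin 3) (Fin 3) ℂ) +
        ((3 / 2 : ℝ) : ℂ) • ((l1 : ℂ) • (spinOneJ1 ⊗ₖ spinOneJ1) +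
          (l2 : ℂ) • (spinOneJ2 ⊗ₖ spinOneJ2) +
          (l3 : ℂ) • (spinOneJ3 ⊗ₖ spinOneJ3)) =
      Nmat (3/4*(l1+l2)) (3/4*(l1-l2)) (3/2*l3) := by
  rw [J1_kron, J2_kron, Nmat]
  match_scalars <;> push_cast <;> ring

lemma Mminus_eq (l1 l2 l3 : ℝ) :
    (1 : Matrix (Fin 3) (Fin 3) ℂ) ⊗ₖ (1 : Matrix (Fin 3) (Fin 3) ℂ) +
        ((3 / 2 : ℝ) : ℂ) • ((l1 : ℂ) • (spinOneJ1 ⊗ₖ spinOneJ1) -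
          (l2 : ℂ) • (spinOneJ2 ⊗ₖ spinOneJ2) +
          (l3 : ℂ) • (spinOneJ3 ⊗ₖ spinOneJ3)) =
      Nmat (3/4*(l1-l2)) (3/4*(l1+l2)) (3/2*l3) := by
  rw [J1_kron, J2_kron, Nmat]
  match_scalars <;> push_cast <;> ring


theorem qutrit_ppt_iff (l1 l2 l3 : ℝ) :
    (((1 : Matrix (Fin 3) (Fin 3) ℂ) ⊗ₖ (1 : Matrix (Fin 3) (Fin 3) ℂ) +
        ((3 / 2 : ℝ) : ℂ) • ((l1 : ℂ) • (spinOneJ1 ⊗ₖ spinOneJ1) +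
          (l2 : ℂ) • (spinOneJ2 ⊗ₖ spinOneJ2) +
          (l3 : ℂ) • (spinOneJ3 ⊗ₖ spinOneJ3))).PosSemidef ∧
      ((1 : Matrix (Fin 3) (Fin 3) ℂ) ⊗ₖ (1 : Matrix (Fin 3) (Fin 3) ℂ) +
        ((3 / 2 : ℝ) : ℂ) • ((l1 : ℂ) • (spinOneJ1 ⊗ₖ spinOneJ1) -
          (l2 : ℂ) • (spinOneJ2 ⊗ₖ spinOneJ2) +
          (l3 : ℂ) • (spinOneJ3 ⊗ₖ spinOneJ3))).PosSemidef) ↔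
    (4 - 9 * (l1 ^ 2 + l2 ^ 2 + l3 ^ 2) + 27 * (l1 * l2 * l3) ≥ 0 ∧
      4 - 9 * (l1 ^ 2 + l2 ^ 2 + l3 ^ 2) - 27 * (l1 * l2 * l3) ≥ 0) := by
  rw [Mplus_eq, Mminus_eq]
  constructor
  · rintro ⟨hp, hm⟩
    have d2 := fwd _ _ _ hp
    have d1 := fwd _ _ _ hm
    constructor
    · nlinarith [d1]
    · nlinarith [d2]
  · rintro ⟨g1, g2⟩
    have hs : l1^2 + l2^2 + l3^2 ≤ 4/9 := by nlinarith
    have h1 : |3/4*(l1+l2) + 3/4*(l1-l2)| ≤ 1 := by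
      rw [abs_le]; constructor <;> nlinarith [sq_nonneg (l1 - 2/3), sq_nonneg (l1 + 2/3), sq_nonneg l2, sq_nonneg l3]
    have h2 : |3/4*(l1+l2) - 3/4*(l1-l2)| ≤ 1 := by
      rw [abs_le]; constructor <;> nlinarith [sq_nonneg (l2 - 2/3), sq_nonneg (l2 + 2/3), sq_nonneg l1, sq_nonneg l3]
    have h3 : |(3/2*l3 : ℝ)| ≤ 1 := by
      rw [abs_le]; constructor <;> nlinarith [sq_nonneg (l3 - 2/3), sq_nonneg (l3 + 2/3), sq_nonneg l1, sq_nonneg l2]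
    constructor
    · apply bwd _ _ _ h1 h2 h3
      nlinarith [g2]
    · apply bwd _ _ _ ?_ ?_ h3 ?_
      · rw [abs_le] at h1 ⊢; constructor <;> linarith [h1.1, h1.2]
      · rw [abs_le] at h2 ⊢; constructor <;> linarith [h2.1, h2.2]
      · nlinarith [g1]
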